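/- Let φ be the Lévy measure of the two-dimensional Lévy process g_t = (g^r_t, ρ g^r_t + g̃^λ_t), where g^r is gamma with parameters (c_r, γ_r), g̃^λ is a gamma-subordinated gamma process with Lévy density φ_λ, and ρ ≥ 0. Then ∫_{‖x‖ ≥ 1} log(‖x‖) φ(dx) = ∫_{1/(1+ρ)}^∞ log(x(1+ρ)) γ_r e^{−c_r x}/x dx + ∫_1^∞ log(y) φ_λ(y) dy < ∞. -/

import Mathlib

open MeasureTheory Set Real

/-- The Lévy density of the gamma-time-changed gamma (double gamma) process. -/
noncomputable def doubleGammaLevyDensity (cL gL cT gT : ℝ) (y : ℝ) : ℝ :=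
  gT * (Real.exp (-cL * y) / y) *
    ∫ x in Ioi (0 : ℝ), (cL * y) ^ (gL * x) / Real.Gamma (gL * x) * (Real.exp (-cT * x) / x)

/-- The Lévy measure of the two-dimensional Lévy process
`g_t = (g^r_t, ρ g^r_t + g̃^λ_t)`: it is supported on the ray `{(x, ρx) : x > 0}` with
intensity `φ_r(x) = γ_r e^{-c_r x}/x` and on the axis `{(0,y) : y > 0}` with intensity
`φ_λ`. -/
noncomputable def twoDimLevyMeasure (cr γr cL gL cT gT ρ : ℝ) : Measure (ℝ × ℝ) :=
  Measure.map (fun x => (x, ρ * x))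
      ((volume.restrict (Ioi (0:ℝ))).withDensity
        (fun x => ENNReal.ofReal (γr * Real.exp (-cr * x) / x)))
    + Measure.map (fun y => ((0:ℝ), y))
      ((volume.restrict (Ioi (0:ℝ))).withDensity
        (fun y => ENNReal.ofReal (doubleGammaLevyDensity cL gL cT gT y)))

lemma aux_cont (cL gL cT gT : ℝ) (hcL : 0 < cL) (hgL : 0 < gL) :
    ContinuousOn (fun z : ℝ × ℝ =>
      (cL * z.1) ^ (gL * z.2) / Real.Gamma (gL * z.2) * (Real.exp (-cT * z.2) / z.2))
      (Ioi (1:ℝ) ×ˢ Ioi (0:ℝ)) := by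
  intro z hz
  obtain ⟨hz1, hz2⟩ := hz
  simp only [mem_Ioi] at hz1 hz2
  have hz10 : (0:ℝ) < z.1 := lt_trans one_pos hz1
  have hs : 0 < gL * z.2 := by positivity
  have hΓ : Real.Gamma (gL * z.2) ≠ 0 := (Real.Gamma_pos_of_pos hs).ne'
  apply ContinuousAt.continuousWithinAt
  have c3 : ContinuousAt (fun z : ℝ × ℝ => (cL * z.1) ^ (gL * z.2)) z :=
    ContinuousAt.rpow ((continuous_const.mul continuous_fst).continuousAt)
      ((continuous_const.mul continuous_snd).continuousAt) (Or.inl (by positivity))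
  have c4 : ContinuousAt (fun z : ℝ × ℝ => Real.Gamma (gL * z.2)) z := by
    have hd : DifferentiableAt ℝ Real.Gamma (gL * z.2) :=
      Real.differentiableAt_Gamma (fun m => by
        have : -(m:ℝ) ≤ 0 := neg_nonpos.mpr (Nat.cast_nonneg m)
        exact ne_of_gt (lt_of_le_of_lt this hs))
    exact ContinuousAt.comp (g := Real.Gamma) (f := fun z : ℝ × ℝ => gL * z.2)
      hd.continuousAt ((continuous_const.mul continuous_snd).continuousAt)
  have c5 : ContinuousAt (fun z : ℝ × ℝ => Real.exp (-cT * z.2) / z.2) z :=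
    ((Real.continuous_exp.comp (continuous_const.mul continuous_snd)).continuousAt).div
      continuous_snd.continuousAt hz2.ne'
  exact (c3.div c4 hΓ).mul c5

lemma aux_inner (cL gL cT gT : ℝ) (hcL : 0 < cL) (hgL : 0 < gL) (hgT : 0 < gT)
    {x : ℝ} (hx : 0 < x) :
    ∫⁻ y in Ioi (1:ℝ), ENNReal.ofReal ((Real.log y * (gT * (Real.exp (-cL * y) / y))) *
        ((cL * y) ^ (gL * x) / Real.Gamma (gL * x) * (Real.exp (-cT * x) / x)))
      ≤ ENNReal.ofReal (gT * gL / cL * Real.exp (-cT * x)) := by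
  have hs : 0 < gL * x := by positivity
  have hΓ : 0 < Real.Gamma (gL * x) := Real.Gamma_pos_of_pos hs
  set s : ℝ := gL * x with hs_def
  set D : ℝ := gT / Real.Gamma s * (Real.exp (-cT * x) / x) with hD_def
  have hD0 : 0 ≤ D := by positivity
  -- pointwise bound
  have hpt : ∀ y ∈ Ioi (1:ℝ),
      (Real.log y * (gT * (Real.exp (-cL * y) / y))) *
        ((cL * y) ^ s / Real.Gamma s * (Real.exp (-cT * x) / x))
      ≤ Real.exp (-cL * y) * (cL * y) ^ s * D := by
    intro y hy
    have hy1 : (1:ℝ) < y := hy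
    have hy0 : (0:ℝ) < y := lt_trans one_pos hy1
    have hrp : (0:ℝ) ≤ (cL * y) ^ s := Real.rpow_nonneg (by positivity) _
    have key : (Real.log y * (gT * (Real.exp (-cL * y) / y))) *
        ((cL * y) ^ s / Real.Gamma s * (Real.exp (-cT * x) / x))
        = (Real.log y / y) * (Real.exp (-cL * y) * (cL * y) ^ s * D) := by
      rw [hD_def]; field_simp
    rw [key]
    have hlog : Real.log y / y ≤ 1 :=
      (div_le_one hy0).2 ((Real.log_le_sub_one_of_pos hy0).trans (by linarith))
    calc (Real.log y / y) * (Real.exp (-cL * y) * (cL * y) ^ s * D)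
        ≤ 1 * (Real.exp (-cL * y) * (cL * y) ^ s * D) :=
          mul_le_mul_of_nonneg_right hlog
            (mul_nonneg (mul_nonneg (Real.exp_nonneg _) hrp) hD0)
      _ = Real.exp (-cL * y) * (cL * y) ^ s * D := one_mul _
  -- integrability of majorant on Ioi 0
  have hint : IntegrableOn (fun y => Real.exp (-cL * y) * (cL * y) ^ s * D) (Ioi (0:ℝ)) := by
    have h0 : IntegrableOn (fun y : ℝ => y ^ s * Real.exp (-cL * y)) (Ioi 0) := by
      have h := integrableOn_rpow_mul_exp_neg_mul_rpow
        (by linarith : (-1:ℝ) < s) (zero_lt_one : (0:ℝ) < 1) hcL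
      exact h.congr_fun (fun y hy => by simp only [Real.rpow_one]) measurableSet_Ioi
    have h1 : IntegrableOn (fun y : ℝ => cL ^ s * (y ^ s * Real.exp (-cL * y)) * D)
        (Ioi 0) := (h0.const_mul (cL ^ s)).mul_const D
    exact h1.congr_fun (fun y hy => by
      rw [Real.mul_rpow hcL.le (le_of_lt hy)]; ring) measurableSet_Ioi
  -- value of the majorant integral
  have hval : ∫ y in Ioi (0:ℝ), Real.exp (-cL * y) * (cL * y) ^ s * D
      = gT * gL / cL * Real.exp (-cT * x) := by
    have e1 : ∫ y in Ioi (0:ℝ), Real.exp (-cL * y) * (cL * y) ^ s * D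
        = ∫ y in Ioi (0:ℝ), (cL ^ s * D) * (y ^ ((s + 1) - 1) * Real.exp (-(cL * y))) := by
      refine setIntegral_congr_fun measurableSet_Ioi (fun y hy => ?_)
      rw [Real.mul_rpow hcL.le (le_of_lt hy)]
      simp only [add_sub_cancel_right, neg_mul]
      ring
    rw [e1, integral_const_mul, integral_rpow_mul_exp_neg_mul_Ioi (by linarith) hcL,
      Real.Gamma_add_one hs.ne']
    have e2 : cL ^ s * (1 / cL) ^ (s + 1) = 1 / cL := by
      rw [one_div, ← Real.rpow_neg_one cL, ← Real.rpow_mul hcL.le, ← Real.rpow_add hcL]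
      rw [show s + -1 * (s + 1) = -1 by ring, Real.rpow_neg_one]
    calc cL ^ s * D * ((1 / cL) ^ (s + 1) * (s * Real.Gamma s))
        = (cL ^ s * (1 / cL) ^ (s + 1)) * (D * (s * Real.Gamma s)) := by ring
      _ = 1 / cL * (D * (s * Real.Gamma s)) := by rw [e2]
      _ = gT * gL / cL * Real.exp (-cT * x) := by
          rw [hD_def, hs_def]; field_simp
  calc ∫⁻ y in Ioi (1:ℝ), ENNReal.ofReal ((Real.log y * (gT * (Real.exp (-cL * y) / y))) *
        ((cL * y) ^ s / Real.Gamma s * (Real.exp (-cT * x) / x)))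
      ≤ ∫⁻ y in Ioi (1:ℝ), ENNReal.ofReal (Real.exp (-cL * y) * (cL * y) ^ s * D) := by
        refine lintegral_mono_ae ?_
        filter_upwards [ae_restrict_mem measurableSet_Ioi] with y hy
        exact ENNReal.ofReal_le_ofReal (hpt y hy)
    _ ≤ ∫⁻ y in Ioi (0:ℝ), ENNReal.ofReal (Real.exp (-cL * y) * (cL * y) ^ s * D) :=
        lintegral_mono_set (Ioi_subset_Ioi zero_le_one)
    _ = ENNReal.ofReal (∫ y in Ioi (0:ℝ), Real.exp (-cL * y) * (cL * y) ^ s * D) := by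
        refine (ofReal_integral_eq_lintegral_ofReal hint ?_).symm
        filter_upwards [ae_restrict_mem measurableSet_Ioi] with y hy
        exact mul_nonneg (mul_nonneg (Real.exp_nonneg _)
          (Real.rpow_nonneg (mul_nonneg hcL.le (le_of_lt hy)) _)) hD0
    _ = ENNReal.ofReal (gT * gL / cL * Real.exp (-cT * x)) := by rw [hval]

lemma aux_part2 (cL gL cT gT : ℝ) (hcL : 0 < cL) (hgL : 0 < gL) (hcT : 0 < cT)
    (hgT : 0 < gT) :
    Integrable (fun z : ℝ × ℝ => (Real.log z.1 * (gT * (Real.exp (-cL * z.1) / z.1))) *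
        ((cL * z.1) ^ (gL * z.2) / Real.Gamma (gL * z.2) * (Real.exp (-cT * z.2) / z.2)))
      ((volume.restrict (Ioi (1:ℝ))).prod (volume.restrict (Ioi (0:ℝ)))) := by
  set f : ℝ × ℝ → ℝ := fun z => (Real.log z.1 * (gT * (Real.exp (-cL * z.1) / z.1))) *
      ((cL * z.1) ^ (gL * z.2) / Real.Gamma (gL * z.2) * (Real.exp (-cT * z.2) / z.2))
    with hf_def
  have hprodset : MeasurableSet (Ioi (1:ℝ) ×ˢ Ioi (0:ℝ)) :=
    measurableSet_Ioi.prod measurableSet_Ioi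
  have hcont : ContinuousOn f (Ioi (1:ℝ) ×ˢ Ioi (0:ℝ)) := by
    intro z hz
    obtain ⟨hz1, hz2⟩ := hz
    simp only [mem_Ioi] at hz1 hz2
    have hz10 : (0:ℝ) < z.1 := lt_trans one_pos hz1
    refine ContinuousWithinAt.mul ?_ ((aux_cont cL gL cT gT hcL hgL) z ⟨hz1, hz2⟩)
    apply ContinuousAt.continuousWithinAt
    have c1 : ContinuousAt (fun z : ℝ × ℝ => Real.log z.1) z :=
      ContinuousAt.comp (f := fun z : ℝ × ℝ => z.1) (Real.continuousAt_log hz10.ne')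
        continuous_fst.continuousAt
    exact c1.mul (continuousAt_const.mul
      (((Real.continuous_exp.comp (continuous_const.mul continuous_fst)).continuousAt).div
        continuous_fst.continuousAt hz10.ne'))
  have hmeas : AEStronglyMeasurable f
      ((volume.restrict (Ioi (1:ℝ))).prod (volume.restrict (Ioi (0:ℝ)))) := by
    rw [Measure.prod_restrict]
    exact hcont.aestronglyMeasurable hprodset
  have hnn : ∀ z ∈ Ioi (1:ℝ) ×ˢ Ioi (0:ℝ), 0 ≤ f z := by
    intro z hz
    obtain ⟨hz1, hz2⟩ := hz
    simp only [mem_Ioi] at hz1 hz2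
    have hz10 : (0:ℝ) < z.1 := lt_trans one_pos hz1
    have hΓ : 0 < Real.Gamma (gL * z.2) := Real.Gamma_pos_of_pos (by positivity)
    have h1 : 0 ≤ Real.log z.1 := Real.log_nonneg hz1.le
    have h2 : (0:ℝ) ≤ (cL * z.1) ^ (gL * z.2) := Real.rpow_nonneg (by positivity) _
    refine mul_nonneg (mul_nonneg h1 (by positivity)) (mul_nonneg ?_ (by positivity))
    exact div_nonneg h2 hΓ.le
  have hae_nn : 0 ≤ᵐ[(volume.restrict (Ioi (1:ℝ))).prod (volume.restrict (Ioi (0:ℝ)))] f := by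
    rw [Measure.prod_restrict]
    filter_upwards [ae_restrict_mem hprodset] with z hz using hnn z hz
  refine ⟨hmeas, ?_⟩
  rw [hasFiniteIntegral_iff_ofReal hae_nn]
  have haemeas : AEMeasurable (fun z => ENNReal.ofReal (f z))
      ((volume.restrict (Ioi (1:ℝ))).prod (volume.restrict (Ioi (0:ℝ)))) :=
    ENNReal.measurable_ofReal.comp_aemeasurable hmeas.aemeasurable
  rw [lintegral_prod_symm _ haemeas]
  calc ∫⁻ x in Ioi (0:ℝ), ∫⁻ y in Ioi (1:ℝ), ENNReal.ofReal (f (y, x))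
      ≤ ∫⁻ x in Ioi (0:ℝ), ENNReal.ofReal (gT * gL / cL * Real.exp (-cT * x)) := by
        refine lintegral_mono_ae ?_
        filter_upwards [ae_restrict_mem measurableSet_Ioi] with x hx
        exact aux_inner cL gL cT gT hcL hgL hgT hx
    _ = ENNReal.ofReal (∫ x in Ioi (0:ℝ), gT * gL / cL * Real.exp (-cT * x)) := by
        refine (ofReal_integral_eq_lintegral_ofReal
          ((exp_neg_integrableOn_Ioi 0 hcT).const_mul _) ?_).symm
        filter_upwards with x using mul_nonneg (by positivity) (Real.exp_nonneg _)
    _ < ⊤ := ENNReal.ofReal_lt_top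

lemma aux_part2' (cL gL cT gT : ℝ) (hcL : 0 < cL) (hgL : 0 < gL) (hcT : 0 < cT)
    (hgT : 0 < gT) :
    IntegrableOn (fun y => Real.log y * doubleGammaLevyDensity cL gL cT gT y) (Ioi (1:ℝ)) := by
  have h := (aux_part2 cL gL cT gT hcL hgL hcT hgT).integral_prod_left
  refine h.congr (Filter.Eventually.of_forall fun y => ?_)
  simp only []
  rw [integral_const_mul, doubleGammaLevyDensity, mul_assoc]

lemma aux_dgd_meas (cL gL cT gT : ℝ) (hcL : 0 < cL) (hgL : 0 < gL) :
    AEMeasurable (fun y => ENNReal.ofReal (doubleGammaLevyDensity cL gL cT gT y))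
      (volume.restrict (Ioi (1:ℝ))) := by
  have hs : MeasurableSet (Ioi (1:ℝ) ×ˢ Ioi (0:ℝ)) := measurableSet_Ioi.prod measurableSet_Ioi
  have hm : AEStronglyMeasurable (fun z : ℝ × ℝ =>
      (cL * z.1) ^ (gL * z.2) / Real.Gamma (gL * z.2) * (Real.exp (-cT * z.2) / z.2))
      ((volume.restrict (Ioi (1:ℝ))).prod (volume.restrict (Ioi (0:ℝ)))) := by
    rw [Measure.prod_restrict]
    exact (aux_cont cL gL cT gT hcL hgL).aestronglyMeasurable hs
  have hJ := hm.integral_prod_right'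
  have hpre : AEStronglyMeasurable (fun y => doubleGammaLevyDensity cL gL cT gT y)
      (volume.restrict (Ioi (1:ℝ))) := by
    have hg : Measurable fun y : ℝ => gT * (Real.exp (-cL * y) / y) :=
      measurable_const.mul ((Real.measurable_exp.comp (measurable_const.mul measurable_id)).div
        measurable_id)
    exact hg.aestronglyMeasurable.mul hJ
  exact ENNReal.measurable_ofReal.comp_aemeasurable hpre.aemeasurable

lemma aux_dgd_nonneg (cL gL cT gT : ℝ) (hcL : 0 < cL) (hgL : 0 < gL) (hcT : 0 < cT)
    (hgT : 0 < gT) {y : ℝ} (hy : 0 < y) :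
    0 ≤ doubleGammaLevyDensity cL gL cT gT y := by
  refine mul_nonneg (by positivity) (setIntegral_nonneg measurableSet_Ioi fun x hx => ?_)
  have hx0 : (0:ℝ) < x := hx
  have hΓ : 0 < Real.Gamma (gL * x) := Real.Gamma_pos_of_pos (by positivity)
  exact mul_nonneg (div_nonneg (Real.rpow_nonneg (by positivity) _) hΓ.le)
    (div_nonneg (Real.exp_nonneg _) hx0.le)

/-- Log-moment of the Lévy measure of `(g^r, ρ g^r + g̃^λ)` (with the `ℓ¹` norm
`‖(x,y)‖ = |x| + |y|`):
`∫_{‖x‖≥1} log ‖x‖ φ(dx) = ∫_{1/(1+ρ)}^∞ log(x(1+ρ)) γ_r e^{-c_r x}/x dx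
  + ∫_1^∞ log y φ_λ(y) dy < ∞`. -/
theorem stmt_12 (cr γr cL gL cT gT ρ : ℝ)
    (hcr : 0 < cr) (hγr : 0 < γr) (hcL : 0 < cL) (hgL : 0 < gL)
    (hcT : 0 < cT) (hgT : 0 < gT) (hρ : 0 ≤ ρ) :
    IntegrableOn (fun x => Real.log (x * (1 + ρ)) * (γr * Real.exp (-cr * x) / x))
        (Ioi (1 / (1 + ρ)))
    ∧ IntegrableOn (fun y => Real.log y * doubleGammaLevyDensity cL gL cT gT y) (Ioi 1)
    ∧ (∫⁻ p in {p : ℝ × ℝ | 1 ≤ |p.1| + |p.2|},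
          ENNReal.ofReal (Real.log (|p.1| + |p.2|))
            ∂(twoDimLevyMeasure cr γr cL gL cT gT ρ))
        = ENNReal.ofReal
            ((∫ x in Ioi (1 / (1 + ρ)), Real.log (x * (1 + ρ)) * (γr * Real.exp (-cr * x) / x))
              + ∫ y in Ioi (1:ℝ), Real.log y * doubleGammaLevyDensity cL gL cT gT y)
    ∧ (∫⁻ p in {p : ℝ × ℝ | 1 ≤ |p.1| + |p.2|},
          ENNReal.ofReal (Real.log (|p.1| + |p.2|))
            ∂(twoDimLevyMeasure cr γr cL gL cT gT ρ)) < ⊤ := by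
  have hρ1 : (0:ℝ) < 1 + ρ := by linarith
  have ha : (0:ℝ) < 1 / (1 + ρ) := by positivity
  -- Part 1
  have part1 : IntegrableOn (fun x => Real.log (x * (1 + ρ)) * (γr * Real.exp (-cr * x) / x))
      (Ioi (1 / (1 + ρ))) := by
    refine Integrable.mono' ((exp_neg_integrableOn_Ioi (1 / (1 + ρ)) hcr).const_mul
      ((1 + ρ) * γr)) ?_ ?_
    · exact ((Real.measurable_log.comp (measurable_id.mul_const _)).mul
        ((measurable_const.mul (Real.measurable_exp.comp
          (measurable_const.mul measurable_id))).div measurable_id)).aestronglyMeasurable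
    · filter_upwards [ae_restrict_mem measurableSet_Ioi] with x hx
      have hx' : 1 / (1 + ρ) < x := hx
      have hx0 : (0:ℝ) < x := lt_trans ha hx'
      have h1 : (1:ℝ) ≤ x * (1 + ρ) := le_of_lt ((div_lt_iff₀ hρ1).mp hx')
      have hlog : 0 ≤ Real.log (x * (1 + ρ)) := Real.log_nonneg h1
      have hden : 0 ≤ γr * Real.exp (-cr * x) / x := div_nonneg (by positivity) hx0.le
      have hle : Real.log (x * (1 + ρ)) ≤ x * (1 + ρ) :=
        (Real.log_le_sub_one_of_pos (by positivity)).trans (by linarith)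
      rw [norm_of_nonneg (mul_nonneg hlog hden)]
      calc Real.log (x * (1 + ρ)) * (γr * Real.exp (-cr * x) / x)
          ≤ (x * (1 + ρ)) * (γr * Real.exp (-cr * x) / x) :=
            mul_le_mul_of_nonneg_right hle hden
        _ = (1 + ρ) * γr * Real.exp (-cr * x) := by field_simp
  have part2 := aux_part2' cL gL cT gT hcL hgL hcT hgT
  -- measurability ingredients
  have hS : MeasurableSet {p : ℝ × ℝ | 1 ≤ |p.1| + |p.2|} :=
    (isClosed_le continuous_const (continuous_fst.abs.add continuous_snd.abs)).measurableSet
  have hF : Measurable fun p : ℝ × ℝ => ENNReal.ofReal (Real.log (|p.1| + |p.2|)) :=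
    ENNReal.measurable_ofReal.comp (Real.measurable_log.comp
      (measurable_fst.abs.add measurable_snd.abs))
  have hg₁ : Measurable fun x : ℝ => (x, ρ * x) :=
    measurable_id.prodMk (measurable_const.mul measurable_id)
  have hg₂ : Measurable fun y : ℝ => ((0:ℝ), y) := measurable_const.prodMk measurable_id
  have hw₁ : Measurable fun x : ℝ => ENNReal.ofReal (γr * Real.exp (-cr * x) / x) :=
    ENNReal.measurable_ofReal.comp ((measurable_const.mul (Real.measurable_exp.comp
      (measurable_const.mul measurable_id))).div measurable_id)
  -- nonnegativity of integrands
  have hnn1 : 0 ≤ᵐ[volume.restrict (Ioi (1 / (1 + ρ)))]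
      fun x => Real.log (x * (1 + ρ)) * (γr * Real.exp (-cr * x) / x) := by
    filter_upwards [ae_restrict_mem measurableSet_Ioi] with x hx
    have hx' : 1 / (1 + ρ) < x := hx
    have hx0 : (0:ℝ) < x := lt_trans ha hx'
    exact mul_nonneg (Real.log_nonneg (le_of_lt ((div_lt_iff₀ hρ1).mp hx')))
      (div_nonneg (by positivity) hx0.le)
  have hnn2 : 0 ≤ᵐ[volume.restrict (Ioi (1:ℝ))]
      fun y => Real.log y * doubleGammaLevyDensity cL gL cT gT y := by
    filter_upwards [ae_restrict_mem measurableSet_Ioi] with y hy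
    have hy1 : (1:ℝ) < y := hy
    exact mul_nonneg (Real.log_nonneg hy1.le)
      (aux_dgd_nonneg cL gL cT gT hcL hgL hcT hgT (lt_trans one_pos hy1))
  -- the ray integral
  have hray : (∫⁻ p in {p : ℝ × ℝ | 1 ≤ |p.1| + |p.2|},
        ENNReal.ofReal (Real.log (|p.1| + |p.2|))
        ∂(Measure.map (fun x => (x, ρ * x))
          ((volume.restrict (Ioi (0:ℝ))).withDensity
            (fun x => ENNReal.ofReal (γr * Real.exp (-cr * x) / x)))))
      = ENNReal.ofReal
          (∫ x in Ioi (1 / (1 + ρ)), Real.log (x * (1 + ρ)) * (γr * Real.exp (-cr * x) / x)) := by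
    rw [Measure.restrict_map hg₁ hS, lintegral_map hF hg₁, restrict_withDensity (hg₁ hS),
      Measure.restrict_restrict (hg₁ hS)]
    have hTset : (fun x : ℝ => (x, ρ * x)) ⁻¹' {p : ℝ × ℝ | 1 ≤ |p.1| + |p.2|} ∩ Ioi 0
        = Ici (1 / (1 + ρ)) := by
      ext x
      simp only [mem_inter_iff, mem_preimage, mem_setOf_eq, mem_Ioi, mem_Ici]
      constructor
      · rintro ⟨h1, h2⟩
        rw [abs_of_pos h2, abs_of_nonneg (by positivity)] at h1
        rw [div_le_iff₀ hρ1]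
        have : x * (1 + ρ) = x + ρ * x := by ring
        linarith
      · intro h
        have hx0 : (0:ℝ) < x := lt_of_lt_of_le ha h
        have h1 : (1:ℝ) ≤ x * (1 + ρ) := (div_le_iff₀ hρ1).mp h
        have : x * (1 + ρ) = x + ρ * x := by ring
        refine ⟨?_, hx0⟩
        rw [abs_of_pos hx0, abs_of_nonneg (by positivity)]
        linarith
    rw [hTset, ← Measure.restrict_congr_set Ioi_ae_eq_Ici]
    have hFg₁ : Measurable fun a : ℝ =>
        ENNReal.ofReal (Real.log (|(a, ρ * a).1| + |(a, ρ * a).2|)) := hF.comp hg₁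
    rw [lintegral_withDensity_eq_lintegral_mul _ hw₁ hFg₁]
    have hcongr : ∀ᵐ x ∂(volume.restrict (Ioi (1 / (1 + ρ)))),
        ((fun x : ℝ => ENNReal.ofReal (γr * Real.exp (-cr * x) / x)) *
          fun a : ℝ => ENNReal.ofReal (Real.log (|(a, ρ * a).1| + |(a, ρ * a).2|))) x
        = ENNReal.ofReal (Real.log (x * (1 + ρ)) * (γr * Real.exp (-cr * x) / x)) := by
      filter_upwards [ae_restrict_mem measurableSet_Ioi] with x hx
      have hx' : 1 / (1 + ρ) < x := hx
      have hx0 : (0:ℝ) < x := lt_trans ha hx'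
      have habs : |x| + |ρ * x| = x * (1 + ρ) := by
        rw [abs_of_pos hx0, abs_of_nonneg (by positivity)]; ring
      simp only [Pi.mul_apply]
      rw [habs, ← ENNReal.ofReal_mul (div_nonneg (by positivity) hx0.le),
        mul_comm (γr * Real.exp (-cr * x) / x)]
    rw [lintegral_congr_ae hcongr, ← ofReal_integral_eq_lintegral_ofReal part1 hnn1]
  -- the axis integral
  have haxis : (∫⁻ p in {p : ℝ × ℝ | 1 ≤ |p.1| + |p.2|},
        ENNReal.ofReal (Real.log (|p.1| + |p.2|))
        ∂(Measure.map (fun y => ((0:ℝ), y))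
          ((volume.restrict (Ioi (0:ℝ))).withDensity
            (fun y => ENNReal.ofReal (doubleGammaLevyDensity cL gL cT gT y)))))
      = ENNReal.ofReal (∫ y in Ioi (1:ℝ), Real.log y * doubleGammaLevyDensity cL gL cT gT y) := by
    rw [Measure.restrict_map hg₂ hS, lintegral_map hF hg₂, restrict_withDensity (hg₂ hS),
      Measure.restrict_restrict (hg₂ hS)]
    have hTset : (fun y : ℝ => ((0:ℝ), y)) ⁻¹' {p : ℝ × ℝ | 1 ≤ |p.1| + |p.2|} ∩ Ioi 0
        = Ici (1:ℝ) := by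
      ext y
      simp only [mem_inter_iff, mem_preimage, mem_setOf_eq, mem_Ioi, mem_Ici, abs_zero, zero_add]
      constructor
      · rintro ⟨h1, h2⟩; rwa [abs_of_pos h2] at h1
      · intro h
        have hy0 : (0:ℝ) < y := lt_of_lt_of_le one_pos h
        exact ⟨by rwa [abs_of_pos hy0], hy0⟩
    rw [hTset, ← Measure.restrict_congr_set Ioi_ae_eq_Ici]
    have hFg₂ : Measurable fun a : ℝ =>
        ENNReal.ofReal (Real.log (|((0:ℝ), a).1| + |((0:ℝ), a).2|)) := hF.comp hg₂
    rw [lintegral_withDensity_eq_lintegral_mul₀ (aux_dgd_meas cL gL cT gT hcL hgL)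
      hFg₂.aemeasurable]
    have hcongr : ∀ᵐ y ∂(volume.restrict (Ioi (1:ℝ))),
        ((fun y : ℝ => ENNReal.ofReal (doubleGammaLevyDensity cL gL cT gT y)) *
          fun a : ℝ => ENNReal.ofReal (Real.log (|((0:ℝ), a).1| + |((0:ℝ), a).2|))) y
        = ENNReal.ofReal (Real.log y * doubleGammaLevyDensity cL gL cT gT y) := by
      filter_upwards [ae_restrict_mem measurableSet_Ioi] with y hy
      have hy1 : (1:ℝ) < y := hy
      have hy0 : (0:ℝ) < y := lt_trans one_pos hy1
      simp only [Pi.mul_apply, abs_zero, zero_add, abs_of_pos hy0]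
      rw [← ENNReal.ofReal_mul (aux_dgd_nonneg cL gL cT gT hcL hgL hcT hgT hy0),
        mul_comm (doubleGammaLevyDensity cL gL cT gT y)]
    rw [lintegral_congr_ae hcongr, ← ofReal_integral_eq_lintegral_ofReal part2 hnn2]
  -- combine
  have hA0 : 0 ≤ ∫ x in Ioi (1 / (1 + ρ)), Real.log (x * (1 + ρ)) *
      (γr * Real.exp (-cr * x) / x) := integral_nonneg_of_ae hnn1
  have hB0 : 0 ≤ ∫ y in Ioi (1:ℝ), Real.log y * doubleGammaLevyDensity cL gL cT gT y :=
    integral_nonneg_of_ae hnn2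
  have key : (∫⁻ p in {p : ℝ × ℝ | 1 ≤ |p.1| + |p.2|},
        ENNReal.ofReal (Real.log (|p.1| + |p.2|))
          ∂(twoDimLevyMeasure cr γr cL gL cT gT ρ))
      = ENNReal.ofReal
          ((∫ x in Ioi (1 / (1 + ρ)), Real.log (x * (1 + ρ)) * (γr * Real.exp (-cr * x) / x))
            + ∫ y in Ioi (1:ℝ), Real.log y * doubleGammaLevyDensity cL gL cT gT y) := by
    simp only [twoDimLevyMeasure]
    rw [Measure.restrict_add, lintegral_add_measure, hray, haxis,
      ENNReal.ofReal_add hA0 hB0]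
  exact ⟨part1, part2, key, key ▸ ENNReal.ofReal_lt_top⟩
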